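/- For every integer n ≥ 3, the number of partitions of n with no parts equal to 1 and whose largest part occurs more than once equals -∑_{k=4}^{n+5} S^{(4)}_{n+5,k} · μ(k); equivalently, p(n) - 2p(n-1) + p(n-2) = -∑_{k=4}^{n+5} S^{(4)}_{n+5,k} · μ(k). -/

import Mathlib

open Finset

/-- The number of partitions of `n`. -/
def p (n : ℕ) : ℕ := Fintype.card (Nat.Partition n)

/-- The partition function extended by zero to negative integer arguments. -/
def pz (m : ℤ) : ℤ := if 0 ≤ m then (p m.toNat : ℤ) else 0

/-- `S r n k` : the total number of parts equal to `k` in all partitions of `n`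
whose parts are all at least `r`. -/
def S (r n k : ℕ) : ℕ :=
  ∑ P : Nat.Partition n, if ∀ i ∈ P.parts, r ≤ i then P.parts.count k else 0


def q (r n : ℕ) : ℕ := Fintype.card {P : Nat.Partition n // ∀ i ∈ P.parts, r ≤ i}

/-- Remove one part equal to `k` from a partition. -/
def removePart {n k r : ℕ} (hk : 1 ≤ k) (hrk : r ≤ k) (hkn : k ≤ n) :
    {P : Nat.Partition n // (∀ i ∈ P.parts, r ≤ i) ∧ k ∈ P.parts} ≃
      {P : Nat.Partition (n - k) // ∀ i ∈ P.parts, r ≤ i} where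
  toFun P := ⟨⟨P.1.parts.erase k,
      fun hi => P.1.parts_pos (Multiset.mem_of_mem_erase hi),
      by have := Multiset.sum_erase P.2.2; rw [P.1.parts_sum] at this; omega⟩,
    fun i hi => P.2.1 i (Multiset.mem_of_mem_erase hi)⟩
  invFun P := ⟨⟨k ::ₘ P.1.parts,
      by rintro i hi; rcases Multiset.mem_cons.1 hi with rfl | hi
         · exact hk
         · exact P.1.parts_pos hi,
      by rw [Multiset.sum_cons, P.1.parts_sum]; omega⟩,
    ⟨by rintro i hi; rcases Multiset.mem_cons.1 hi with rfl | hi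
        · exact hrk
        · exact P.2 i hi, Multiset.mem_cons_self _ _⟩⟩
  left_inv P := by
    ext1; ext1; simp [Multiset.cons_erase P.2.2]
  right_inv P := by
    ext1; ext1; simp

lemma part_le_n {n : ℕ} (P : Nat.Partition n) {i : ℕ} (hi : i ∈ P.parts) : i ≤ n := by
  rw [← P.parts_sum]
  exact Multiset.single_le_sum (fun x _ => Nat.zero_le x) i hi

lemma S_eq_subtype_sum (r m k : ℕ) :
    S r m k = ∑ P : {P : Nat.Partition m // ∀ i ∈ P.parts, r ≤ i}, P.1.parts.count k := by
  rw [S, ← Finset.sum_filter]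
  exact Finset.sum_subtype _ (fun x => by simp) _

lemma q_card_eq (r m : ℕ) :
    (q r m : ℕ) = ∑ _P : {P : Nat.Partition m // ∀ i ∈ P.parts, r ≤ i}, 1 := by
  simp [q]

lemma S_rec (r k n : ℕ) (hk : 1 ≤ k) (hrk : r ≤ k) (hkn : k ≤ n) :
    S r n k = q r (n - k) + S r (n - k) k := by
  have h1 : S r n k = ∑ P : Nat.Partition n,
      if (∀ i ∈ P.parts, r ≤ i) ∧ k ∈ P.parts then P.parts.count k else 0 := by
    rw [S]
    refine Finset.sum_congr rfl fun P _ => ?_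
    by_cases h : ∀ i ∈ P.parts, r ≤ i
    · by_cases h2 : k ∈ P.parts
      · simp [h, h2]
      · simp [h, h2, Multiset.count_eq_zero.2 h2]
    · simp [h]
  rw [h1, ← Finset.sum_filter]
  rw [show (∑ a ∈ Finset.filter (fun a : Nat.Partition n =>
      (∀ i ∈ a.parts, r ≤ i) ∧ k ∈ a.parts) univ, a.parts.count k)
      = ∑ P : {P : Nat.Partition n // (∀ i ∈ P.parts, r ≤ i) ∧ k ∈ P.parts},
        P.1.parts.count k from Finset.sum_subtype _ (fun x => by simp) _]
  rw [Fintype.sum_equiv (removePart hk hrk hkn)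
    (fun P => P.1.parts.count k) (fun P => P.1.parts.count k + 1)
    (fun P => by simp [removePart, Multiset.count_erase_self,
      Nat.sub_add_cancel (Multiset.one_le_count_iff_mem.2 P.2.2)])]
  rw [Finset.sum_add_distrib, S_eq_subtype_sum, q_card_eq]
  ring

lemma S_eq_zero (r k n : ℕ) (hkn : n < k) : S r n k = 0 := by
  rw [S]
  refine Finset.sum_eq_zero fun P _ => ?_
  have : k ∉ P.parts := fun h => absurd (part_le_n P h) (by omega)
  simp [Multiset.count_eq_zero.2 this]

lemma q_rec (r n : ℕ) (hr : 1 ≤ r) :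
    q r n = q (r + 1) n + (if r ≤ n then q r (n - r) else 0) := by
  classical
  have hcard : q r n = Fintype.card {P : Nat.Partition n //
        (∀ i ∈ P.parts, r ≤ i) ∧ r ∈ P.parts} +
      Fintype.card {P : Nat.Partition n // (∀ i ∈ P.parts, r ≤ i) ∧ r ∉ P.parts} := by
    rw [q, Fintype.card_congr
      (Equiv.sumCompl (fun y : {P : Nat.Partition n // ∀ i ∈ P.parts, r ≤ i} =>
        r ∈ y.1.parts)).symm, Fintype.card_sum]
    congr 1
    · exact Fintype.card_congr
        (Equiv.subtypeSubtypeEquivSubtypeInter (fun P : Nat.Partition n => ∀ i ∈ P.parts, r ≤ i)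
          (fun P => r ∈ P.parts))
    · exact Fintype.card_congr
        (Equiv.subtypeSubtypeEquivSubtypeInter (fun P : Nat.Partition n => ∀ i ∈ P.parts, r ≤ i)
          (fun P => r ∉ P.parts))
  have hsecond : Fintype.card {P : Nat.Partition n // (∀ i ∈ P.parts, r ≤ i) ∧ r ∉ P.parts}
      = q (r + 1) n := by
    rw [q]
    refine Fintype.card_congr (Equiv.subtypeEquivRight fun P => ?_)
    constructor
    · rintro ⟨h1, h2⟩ i hi
      have h3 := h1 i hi
      have h4 : i ≠ r := fun h => h2 (h ▸ hi)
      omega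
    · intro h
      exact ⟨fun i hi => le_trans (Nat.le_succ r) (h i hi),
        fun hr' => by have := h r hr'; omega⟩
  rw [hcard, hsecond]
  by_cases hrn : r ≤ n
  · rw [if_pos hrn]
    have : Fintype.card {P : Nat.Partition n // (∀ i ∈ P.parts, r ≤ i) ∧ r ∈ P.parts}
        = q r (n - r) := by
      rw [q]; exact Fintype.card_congr (removePart hr le_rfl hrn)
    rw [this]; ring
  · rw [if_neg hrn]
    have : Fintype.card {P : Nat.Partition n // (∀ i ∈ P.parts, r ≤ i) ∧ r ∈ P.parts} = 0 := by
      rw [Fintype.card_eq_zero_iff]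
      exact ⟨fun P => hrn (part_le_n P.1 P.2.2)⟩
    rw [this]; ring

lemma q_one (n : ℕ) : q 1 n = p n := by
  rw [q, p, Fintype.card_subtype]
  have : Finset.filter (fun P : Nat.Partition n => ∀ i ∈ P.parts, 1 ≤ i) Finset.univ
      = Finset.univ := by
    refine Finset.filter_true_of_mem fun P _ => fun i hi => P.parts_pos hi
  rw [this, Finset.card_univ]

lemma S_closed (r k : ℕ) (hr : 1 ≤ r) (hrk : r ≤ k) : ∀ n,
    S r n k = ∑ j ∈ Finset.Icc 1 n, if j * k ≤ n then q r (n - j * k) else 0 := by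
  intro n
  induction n using Nat.strong_induction_on with
  | _ n ih =>
    by_cases hkn : k ≤ n
    · have hk1 : 1 ≤ k := le_trans hr hrk
      have hn1 : 1 ≤ n := le_trans hk1 hkn
      rw [S_rec r k n hk1 hrk hkn, ih (n - k) (by omega)]
      have hsplit : ∑ j ∈ Finset.Icc 1 n, (if j * k ≤ n then q r (n - j * k) else 0)
          = (if 1 * k ≤ n then q r (n - 1 * k) else 0)
            + ∑ j ∈ (Finset.Icc 1 n).erase 1, (if j * k ≤ n then q r (n - j * k) else 0) :=
        (Finset.add_sum_erase _ _ (Finset.mem_Icc.2 ⟨le_rfl, hn1⟩)).symm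
      rw [hsplit, if_pos (by omega), one_mul]
      congr 1
      have hext : ∑ j ∈ Finset.Icc 1 (n - k), (if j * k ≤ n - k then q r (n - k - j * k) else 0)
          = ∑ j ∈ Finset.Icc 1 (n - 1), (if j * k ≤ n - k then q r (n - k - j * k) else 0) := by
        refine Finset.sum_subset (Finset.Icc_subset_Icc le_rfl (by omega)) ?_
        intro j hj hj'
        simp only [Finset.mem_Icc] at hj hj'
        have : n - k < j := by omega
        have hjk : j ≤ j * k := Nat.le_mul_of_pos_right _ (by omega)
        rw [if_neg (by omega)]
      rw [hext]
      have herase : (Finset.Icc 1 n).erase 1 = Finset.Icc 2 n := by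
        ext x; simp [Finset.mem_Icc, Finset.mem_erase]; omega
      rw [herase]
      refine Finset.sum_nbij' (fun j => j + 1) (fun j => j - 1) ?_ ?_ ?_ ?_ ?_
      · intro j hj; simp only [Finset.mem_Icc] at *; omega
      · intro j hj; simp only [Finset.mem_Icc] at *; omega
      · intro j hj; simp only [Finset.mem_Icc] at hj; show j + 1 - 1 = j; omega
      · intro j hj; simp only [Finset.mem_Icc] at hj; show j - 1 + 1 = j; omega
      · intro j hj
        simp only [Finset.mem_Icc] at hj
        show (if j * k ≤ n - k then q r (n - k - j * k) else 0)
          = if (j + 1) * k ≤ n then q r (n - (j + 1) * k) else 0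
        have h2 : (j + 1) * k = j * k + k := by ring
        rw [h2]
        by_cases hc : j * k ≤ n - k
        · rw [if_pos hc, if_pos (by omega)]
          congr 1
          omega
        · rw [if_neg hc, if_neg (by omega)]
    · rw [S_eq_zero r k n (by omega)]
      refine (Finset.sum_eq_zero fun j hj => ?_).symm
      simp only [Finset.mem_Icc] at hj
      have hjk : k ≤ j * k := Nat.le_mul_of_pos_left _ (by omega)
      rw [if_neg (by omega)]

def c (m : ℕ) : ℤ :=
  if m < 4 then 0 else 1 - (if 2 ∣ m then 1 else 0) - (if 3 ∣ m then 1 else 0)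

lemma moebius_sum_ge4 (m : ℕ) (hm : 4 ≤ m) :
    ∑ k ∈ (Nat.divisors m).filter (fun k => 4 ≤ k), (ArithmeticFunction.moebius k : ℤ)
      = -(c m) := by
  have h0 : ∑ k ∈ Nat.divisors m, (ArithmeticFunction.moebius k : ℤ) = 0 := by
    have h := congrArg (fun f : ArithmeticFunction ℤ => f m)
      ArithmeticFunction.moebius_mul_coe_zeta
    simp only [ArithmeticFunction.coe_mul_zeta_apply, ArithmeticFunction.one_apply] at h
    rwa [if_neg (by omega : m ≠ 1)] at h
  have hsplit := Finset.sum_filter_add_sum_filter_not (Nat.divisors m)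
    (fun k => 4 ≤ k) (fun k => (ArithmeticFunction.moebius k : ℤ))
  have hlowset : (Nat.divisors m).filter (fun k => ¬ 4 ≤ k)
      = ({1, 2, 3} : Finset ℕ).filter (fun k => k ∣ m) := by
    ext k
    simp only [Finset.mem_filter, Nat.mem_divisors, Finset.mem_insert, Finset.mem_singleton]
    constructor
    · rintro ⟨⟨h1, _⟩, h2⟩
      have : k ≠ 0 := by rintro rfl; rw [Nat.zero_dvd] at h1; omega
      exact ⟨by omega, h1⟩
    · rintro ⟨h1, h2⟩
      exact ⟨⟨h2, by omega⟩, by omega⟩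
  have hlow : ∑ k ∈ (Nat.divisors m).filter (fun k => ¬ 4 ≤ k),
      (ArithmeticFunction.moebius k : ℤ) = c m := by
    rw [hlowset, Finset.sum_filter]
    rw [show ({1, 2, 3} : Finset ℕ) = insert 1 (insert 2 {3}) from rfl]
    rw [Finset.sum_insert (by decide), Finset.sum_insert (by decide), Finset.sum_singleton]
    rw [if_pos (Nat.one_dvd m)]
    rw [ArithmeticFunction.moebius_apply_one,
      ArithmeticFunction.moebius_apply_prime Nat.prime_two,
      ArithmeticFunction.moebius_apply_prime Nat.prime_three]
    simp only [c, if_neg (show ¬ m < 4 by omega)]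
    by_cases h2 : 2 ∣ m <;> by_cases h3 : 3 ∣ m <;> simp [h2, h3]
  rw [hlow, h0] at hsplit
  linarith

lemma T_swap (N : ℕ) :
    ∑ k ∈ Finset.Icc 4 N, (S 4 N k : ℤ) * ArithmeticFunction.moebius k
      = ∑ m ∈ Finset.Icc 4 N, (q 4 (N - m) : ℤ) *
          ∑ k ∈ (Nat.divisors m).filter (fun k => 4 ≤ k),
            (ArithmeticFunction.moebius k : ℤ) := by
  have step1 : ∀ k ∈ Finset.Icc 4 N, (S 4 N k : ℤ) * ArithmeticFunction.moebius k
      = ∑ j ∈ (Finset.Icc 1 N).filter (fun j => j * k ≤ N),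
          (q 4 (N - j * k) : ℤ) * ArithmeticFunction.moebius k := by
    intro k hk
    simp only [Finset.mem_Icc] at hk
    rw [S_closed 4 k (by norm_num) hk.1 N]
    push_cast
    rw [Finset.sum_mul]
    simp only [ite_mul, zero_mul]
    rw [← Finset.sum_filter]
  rw [Finset.sum_congr rfl step1, Finset.sum_sigma']
  have step2 : ∑ x ∈ (Finset.Icc 4 N).sigma
        (fun k => (Finset.Icc 1 N).filter (fun j => j * k ≤ N)),
        (q 4 (N - x.2 * x.1) : ℤ) * ArithmeticFunction.moebius x.1
      = ∑ x ∈ (Finset.Icc 4 N).sigma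
        (fun m => (Nat.divisors m).filter (fun k => 4 ≤ k)),
        (q 4 (N - x.1) : ℤ) * ArithmeticFunction.moebius x.2 := by
    refine Finset.sum_nbij' (fun x => ⟨x.2 * x.1, x.1⟩) (fun x => ⟨x.2, x.1 / x.2⟩)
      ?_ ?_ ?_ ?_ ?_
    · rintro ⟨k, j⟩ h
      simp only [Finset.mem_sigma, Finset.mem_filter, Finset.mem_Icc, Nat.mem_divisors] at *
      have hk : k ≤ j * k := Nat.le_mul_of_pos_left _ (by omega)
      exact ⟨⟨by omega, h.2.2⟩, ⟨dvd_mul_left k j, by omega⟩, by omega⟩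
    · rintro ⟨m, k⟩ h
      simp only [Finset.mem_sigma, Finset.mem_filter, Finset.mem_Icc, Nat.mem_divisors] at *
      have hkm : k ≤ m := Nat.le_of_dvd (by omega) h.2.1.1
      have hj1 : 1 ≤ m / k := (Nat.one_le_div_iff (by omega)).2 hkm
      have hjN : m / k ≤ N := le_trans (Nat.div_le_self _ _) h.1.2
      have hmul : m / k * k = m := Nat.div_mul_cancel h.2.1.1
      exact ⟨⟨h.2.2, by omega⟩, by omega, by rw [hmul]; omega⟩
    · rintro ⟨k, j⟩ h
      simp only [Finset.mem_sigma, Finset.mem_filter, Finset.mem_Icc] at h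
      simp [Nat.mul_div_cancel _ (show 0 < k by omega)]
    · rintro ⟨m, k⟩ h
      simp only [Finset.mem_sigma, Finset.mem_filter, Finset.mem_Icc, Nat.mem_divisors] at h
      simp [Nat.div_mul_cancel h.2.1.1]
    · rintro ⟨k, j⟩ h
      rfl
  rw [step2, Finset.sum_sigma]
  refine Finset.sum_congr rfl fun m hm => ?_
  rw [Finset.mul_sum]

open PowerSeries in
noncomputable def Qs (r : ℕ) : PowerSeries ℤ := PowerSeries.mk fun n => (q r n : ℤ)

noncomputable def Pps : PowerSeries ℤ := PowerSeries.mk fun n => (p n : ℤ)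

noncomputable def Cps : PowerSeries ℤ := PowerSeries.mk c

lemma Qs_succ (r : ℕ) (hr : 1 ≤ r) :
    Qs (r + 1) = (1 - PowerSeries.X ^ r) * Qs r := by
  ext n
  rw [sub_mul, one_mul, map_sub, PowerSeries.coeff_X_pow_mul']
  simp only [Qs, PowerSeries.coeff_mk]
  rw [q_rec r n hr]
  by_cases h : r ≤ n
  · rw [if_pos h, if_pos h]; push_cast; ring
  · rw [if_neg h, if_neg h]; push_cast; ring

lemma Qs_one : Qs 1 = Pps := by
  ext n
  simp [Qs, Pps, q_one]

lemma Cps_mul : Cps * (1 - PowerSeries.X ^ 6) = PowerSeries.X ^ 5 *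
    (1 - PowerSeries.X + PowerSeries.X ^ 2) := by
  have hR : PowerSeries.X ^ 5 * (1 - PowerSeries.X + PowerSeries.X ^ 2)
      = PowerSeries.X ^ 5 - PowerSeries.X ^ 6 + (PowerSeries.X ^ 7 : PowerSeries ℤ) := by
    ring
  rw [hR]
  ext n
  have hRc : PowerSeries.coeff n (PowerSeries.X ^ 5 - PowerSeries.X ^ 6
      + (PowerSeries.X ^ 7 : PowerSeries ℤ))
      = (if n = 5 then 1 else 0) - (if n = 6 then 1 else 0) + (if n = 7 then 1 else 0) := by
    rw [_root_.map_add, map_sub, PowerSeries.coeff_X_pow, PowerSeries.coeff_X_pow,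
      PowerSeries.coeff_X_pow]
  rw [hRc, mul_comm, sub_mul, one_mul, map_sub, PowerSeries.coeff_X_pow_mul']
  simp only [Cps, PowerSeries.coeff_mk]
  by_cases hn : n < 12
  · interval_cases n <;> decide
  · have h2 : (2 ∣ n) ↔ (2 ∣ (n - 6)) := by omega
    have h3 : (3 ∣ n) ↔ (3 ∣ (n - 6)) := by omega
    rw [if_pos (by omega : 6 ≤ n)]
    simp only [c, if_neg (by omega : ¬ n < 4), if_neg (by omega : ¬ n - 6 < 4), h2, h3,
      if_neg (by omega : ¬ n = 5), if_neg (by omega : ¬ n = 6), if_neg (by omega : ¬ n = 7)]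
    ring

lemma Cps_mul_E : Cps * ((1 - PowerSeries.X) * (1 - PowerSeries.X ^ 2) *
      (1 - PowerSeries.X ^ 3)) = PowerSeries.X ^ 5 * (1 - PowerSeries.X) ^ 2 := by
  have hne : (1 - PowerSeries.X ^ 6 : PowerSeries ℤ) ≠ 0 := fun h => by
    have := congrArg PowerSeries.constantCoeff h
    simp at this
  refine mul_right_cancel₀ hne ?_
  calc Cps * ((1 - PowerSeries.X) * (1 - PowerSeries.X ^ 2) * (1 - PowerSeries.X ^ 3)) *
        (1 - PowerSeries.X ^ 6)
      = (Cps * (1 - PowerSeries.X ^ 6)) * ((1 - PowerSeries.X) * (1 - PowerSeries.X ^ 2) *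
        (1 - PowerSeries.X ^ 3)) := by ring
    _ = PowerSeries.X ^ 5 * (1 - PowerSeries.X + PowerSeries.X ^ 2) *
        ((1 - PowerSeries.X) * (1 - PowerSeries.X ^ 2) * (1 - PowerSeries.X ^ 3)) := by
        rw [Cps_mul]
    _ = PowerSeries.X ^ 5 * (1 - PowerSeries.X) ^ 2 * (1 - PowerSeries.X ^ 6) := by ring

lemma Qs_four : Qs 4 = (1 - PowerSeries.X) * (1 - PowerSeries.X ^ 2) *
    (1 - PowerSeries.X ^ 3) * Pps := by
  have h4 : Qs 4 = (1 - PowerSeries.X ^ 3) * Qs 3 := Qs_succ 3 (by norm_num)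
  have h3 : Qs 3 = (1 - PowerSeries.X ^ 2) * Qs 2 := Qs_succ 2 (by norm_num)
  have h2 : Qs 2 = (1 - PowerSeries.X ^ 1) * Qs 1 := Qs_succ 1 (by norm_num)
  rw [h4, h3, h2, Qs_one]
  ring

lemma Cps_Qs_coeff (N : ℕ) (hN : 7 ≤ N) :
    PowerSeries.coeff N (Cps * Qs 4)
      = (p (N - 5) : ℤ) - 2 * (p (N - 6) : ℤ) + (p (N - 7) : ℤ) := by
  rw [Qs_four, show Cps * ((1 - PowerSeries.X) * (1 - PowerSeries.X ^ 2) *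
      (1 - PowerSeries.X ^ 3) * Pps) = (Cps * ((1 - PowerSeries.X) * (1 - PowerSeries.X ^ 2) *
      (1 - PowerSeries.X ^ 3))) * Pps by ring, Cps_mul_E]
  rw [show (PowerSeries.X ^ 5 * (1 - PowerSeries.X) ^ 2 : PowerSeries ℤ) * Pps
    = PowerSeries.X ^ 5 * Pps - 2 * (PowerSeries.X ^ 6 * Pps) + PowerSeries.X ^ 7 * Pps
    by ring]
  rw [show (PowerSeries.X ^ 5 * Pps - 2 * (PowerSeries.X ^ 6 * Pps) + PowerSeries.X ^ 7 * Pps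
      : PowerSeries ℤ) = PowerSeries.X ^ 5 * Pps -
      (PowerSeries.X ^ 6 * Pps + PowerSeries.X ^ 6 * Pps) + PowerSeries.X ^ 7 * Pps by ring]
  rw [_root_.map_add, map_sub, _root_.map_add, PowerSeries.coeff_X_pow_mul',
    PowerSeries.coeff_X_pow_mul', PowerSeries.coeff_X_pow_mul']
  rw [if_pos (by omega : 5 ≤ N), if_pos (by omega : 6 ≤ N), if_pos (by omega : 7 ≤ N)]
  simp only [Pps, PowerSeries.coeff_mk]
  ring


lemma sup_mem (s : Multiset ℕ) (hs : s ≠ 0) : s.sup ∈ s := by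
  induction s using Multiset.induction_on with
  | empty => exact absurd rfl hs
  | cons a t ih =>
    rw [Multiset.sup_cons]
    by_cases ht : t = 0
    · subst ht; simp
    · rcases le_total a t.sup with h | h
      · rw [sup_eq_right.2 h]; exact Multiset.mem_cons_of_mem (ih ht)
      · rw [sup_eq_left.2 h]; exact Multiset.mem_cons_self a t

def rep {n : ℕ} (P : Nat.Partition n) : Prop :=
  ∃ m ∈ P.parts, (∀ i ∈ P.parts, i ≤ m) ∧ 2 ≤ P.parts.count m

lemma parts_ne_zero {n : ℕ} (P : Nat.Partition n) (hn : 1 ≤ n) : P.parts ≠ 0 := by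
  intro h
  have := P.parts_sum
  rw [h] at this
  simp at this
  omega

lemma part_le_n' {n : ℕ} (P : Nat.Partition n) {i : ℕ} (hi : i ∈ P.parts) : i ≤ n := by
  rw [← P.parts_sum]
  exact Multiset.single_le_sum (fun x _ => Nat.zero_le x) i hi

lemma dom_facts {n : ℕ} (hn : 3 ≤ n) (P : Nat.Partition n) (h2 : ∀ i ∈ P.parts, 2 ≤ i)
    (hnr : ¬ rep P) :
    P.parts.sup ∈ P.parts ∧ 3 ≤ P.parts.sup ∧ P.parts.count P.parts.sup = 1 := by
  have hne : P.parts ≠ 0 := parts_ne_zero P (by omega)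
  have hmem := sup_mem _ hne
  have hmax : ∀ i ∈ P.parts, i ≤ P.parts.sup := fun i hi => Multiset.le_sup hi
  have hc1 : 1 ≤ P.parts.count P.parts.sup := Multiset.one_le_count_iff_mem.2 hmem
  have hcount : P.parts.count P.parts.sup ≤ 1 := by
    by_contra h
    exact hnr ⟨P.parts.sup, hmem, hmax, by omega⟩
  have hM3 : 3 ≤ P.parts.sup := by
    by_contra h
    have hM2 : P.parts.sup = 2 := by have := h2 _ hmem; omega
    have hall : ∀ b ∈ P.parts, b = 2 := fun b hb => by
      have := h2 b hb; have := hmax b hb; omega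
    have hrep : P.parts = Multiset.replicate (Multiset.card P.parts) 2 :=
      Multiset.eq_replicate_card.2 hall
    have hsum := P.parts_sum
    rw [hrep, Multiset.sum_replicate, smul_eq_mul] at hsum
    have hcard : 2 ≤ Multiset.card P.parts := by omega
    have : P.parts.count 2 = Multiset.card P.parts := by
      rw [hrep, Multiset.count_replicate]
      simp [Multiset.card_replicate]
    rw [hM2] at hcount
    omega
  exact ⟨hmem, hM3, by omega⟩

set_option maxHeartbeats 800000 in
def uniqueMaxEquiv (n m : ℕ) (hm : m + 1 = n) (hn : 3 ≤ n) :
    {P : Nat.Partition n // (∀ i ∈ P.parts, 2 ≤ i) ∧ ¬ rep P} ≃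
    {P : Nat.Partition m // ∀ i ∈ P.parts, 2 ≤ i} where
  toFun P :=
    ⟨⟨(P.1.parts.sup - 1) ::ₘ P.1.parts.erase P.1.parts.sup,
      by
        intro i hi
        obtain ⟨hmem, hM3, hc⟩ := dom_facts hn P.1 P.2.1 P.2.2
        rcases Multiset.mem_cons.1 hi with rfl | hi
        · omega
        · exact P.1.parts_pos (Multiset.mem_of_mem_erase hi),
      by
        obtain ⟨hmem, hM3, hc⟩ := dom_facts hn P.1 P.2.1 P.2.2
        have hs := Multiset.sum_erase hmem
        rw [P.1.parts_sum] at hs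
        have hMn := part_le_n' P.1 hmem
        rw [Multiset.sum_cons]
        omega⟩,
      by
        intro i hi
        obtain ⟨hmem, hM3, hc⟩ := dom_facts hn P.1 P.2.1 P.2.2
        rcases Multiset.mem_cons.1 hi with rfl | hi
        · omega
        · exact P.2.1 i (Multiset.mem_of_mem_erase hi)⟩
  invFun P :=
    ⟨⟨(P.1.parts.sup + 1) ::ₘ P.1.parts.erase P.1.parts.sup,
      by
        intro i hi
        rcases Multiset.mem_cons.1 hi with rfl | hi
        · omega
        · exact P.1.parts_pos (Multiset.mem_of_mem_erase hi),
      by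
        have hne : P.1.parts ≠ 0 := parts_ne_zero P.1 (by omega)
        have hmem := sup_mem _ hne
        have hs := Multiset.sum_erase hmem
        rw [P.1.parts_sum] at hs
        have hMn := part_le_n' P.1 hmem
        rw [Multiset.sum_cons]
        omega⟩,
      by
        constructor
        · intro i hi
          have hne : P.1.parts ≠ 0 := parts_ne_zero P.1 (by omega)
          have hmem := sup_mem _ hne
          rcases Multiset.mem_cons.1 hi with rfl | hi
          · have := P.2 _ hmem; omega
          · exact P.2 i (Multiset.mem_of_mem_erase hi)
        · rintro ⟨a, ha, hamax, hacount⟩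
          have hne : P.1.parts ≠ 0 := parts_ne_zero P.1 (by omega)
          have hmem := sup_mem _ hne
          set M := P.1.parts.sup with hM
          have haM : a = M + 1 := by
            have h1 : a ≤ M + 1 := by
              rcases Multiset.mem_cons.1 ha with rfl | hi
              · exact le_rfl
              · have := Multiset.le_sup (Multiset.mem_of_mem_erase hi); omega
            have h2 : M + 1 ≤ a := hamax _ (Multiset.mem_cons_self _ _)
            omega
          subst haM
          have hnotin : (M + 1) ∉ P.1.parts.erase M := by
            intro h
            have := Multiset.le_sup (Multiset.mem_of_mem_erase h)
            omega
          have hacount' : 2 ≤ Multiset.count (M + 1) ((M + 1) ::ₘ P.1.parts.erase M) :=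
            hacount
          rw [Multiset.count_cons_self, Multiset.count_eq_zero.2 hnotin] at hacount'
          omega⟩
  left_inv P := by
    obtain ⟨hmem, hM3, hc⟩ := dom_facts hn P.1 P.2.1 P.2.2
    have hnotin : P.1.parts.sup ∉ P.1.parts.erase P.1.parts.sup := by
      rw [← Multiset.count_eq_zero, Multiset.count_erase_self, hc]
    have hsupQ : ((P.1.parts.sup - 1) ::ₘ P.1.parts.erase P.1.parts.sup).sup
        = P.1.parts.sup - 1 := by
      apply le_antisymm
      · rw [Multiset.sup_le]
        intro b hb
        rcases Multiset.mem_cons.1 hb with rfl | hb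
        · exact le_rfl
        · have hble := Multiset.le_sup (Multiset.mem_of_mem_erase hb)
          have hbne : b ≠ P.1.parts.sup := fun h => hnotin (h ▸ hb)
          omega
      · exact Multiset.le_sup (Multiset.mem_cons_self _ _)
    apply Subtype.ext
    apply Nat.Partition.ext
    show (((P.1.parts.sup - 1) ::ₘ P.1.parts.erase P.1.parts.sup).sup + 1) ::ₘ
        (((P.1.parts.sup - 1) ::ₘ P.1.parts.erase P.1.parts.sup).erase
          ((P.1.parts.sup - 1) ::ₘ P.1.parts.erase P.1.parts.sup).sup) = P.1.parts
    rw [hsupQ, show P.1.parts.sup - 1 + 1 = P.1.parts.sup by omega,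
      Multiset.erase_cons_head, Multiset.cons_erase hmem]
  right_inv P := by
    have hne : P.1.parts ≠ 0 := parts_ne_zero P.1 (by omega)
    have hmem := sup_mem _ hne
    have hsupQ : ((P.1.parts.sup + 1) ::ₘ P.1.parts.erase P.1.parts.sup).sup
        = P.1.parts.sup + 1 := by
      apply le_antisymm
      · rw [Multiset.sup_le]
        intro b hb
        rcases Multiset.mem_cons.1 hb with rfl | hb
        · exact le_rfl
        · have := Multiset.le_sup (Multiset.mem_of_mem_erase hb); omega
      · exact Multiset.le_sup (Multiset.mem_cons_self _ _)
    apply Subtype.ext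
    apply Nat.Partition.ext
    show (((P.1.parts.sup + 1) ::ₘ P.1.parts.erase P.1.parts.sup).sup - 1) ::ₘ
        (((P.1.parts.sup + 1) ::ₘ P.1.parts.erase P.1.parts.sup).erase
          ((P.1.parts.sup + 1) ::ₘ P.1.parts.erase P.1.parts.sup).sup) = P.1.parts
    rw [hsupQ, show P.1.parts.sup + 1 - 1 = P.1.parts.sup from rfl,
      Multiset.erase_cons_head, Multiset.cons_erase hmem]


lemma no_one_iff {n : ℕ} (P : Nat.Partition n) : 1 ∉ P.parts ↔ ∀ i ∈ P.parts, 2 ≤ i := by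
  constructor
  · intro h i hi
    have h1 := P.parts_pos hi
    have : i ≠ 1 := fun he => h (he ▸ hi)
    omega
  · intro h h1
    have := h 1 h1
    omega

lemma card_split (n : ℕ) :
    q 2 n = Nat.card {P : Nat.Partition n // (∀ i ∈ P.parts, 2 ≤ i) ∧ rep P}
      + Nat.card {P : Nat.Partition n // (∀ i ∈ P.parts, 2 ≤ i) ∧ ¬ rep P} := by
  classical
  rw [q, ← Nat.card_eq_fintype_card,
    Nat.card_congr (Equiv.sumCompl
      (fun y : {P : Nat.Partition n // ∀ i ∈ P.parts, 2 ≤ i} => rep y.1)).symm,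
    Nat.card_sum]
  congr 1
  · exact Nat.card_congr (Equiv.subtypeSubtypeEquivSubtypeInter
      (fun P : Nat.Partition n => ∀ i ∈ P.parts, 2 ≤ i) rep)
  · exact Nat.card_congr (Equiv.subtypeSubtypeEquivSubtypeInter
      (fun P : Nat.Partition n => ∀ i ∈ P.parts, 2 ≤ i) (fun P => ¬ rep P))

lemma card_U (n : ℕ) (hn : 3 ≤ n) :
    Nat.card {P : Nat.Partition n // (∀ i ∈ P.parts, 2 ≤ i) ∧ ¬ rep P} = q 2 (n - 1) := by
  rw [Nat.card_congr (uniqueMaxEquiv n (n - 1) (by omega) hn), q, Nat.card_eq_fintype_card]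

lemma q2p (n : ℕ) (hn : 1 ≤ n) : p n = q 2 n + p (n - 1) := by
  have h := q_rec 1 n (le_rfl)
  rw [q_one, if_pos hn, q_one] at h
  exact h

lemma card_A (n : ℕ) (hn : 3 ≤ n) :
    (Nat.card {P : Nat.Partition n // 1 ∉ P.parts ∧ rep P} : ℤ)
      = (p n : ℤ) - 2 * (p (n - 1) : ℤ) + (p (n - 2) : ℤ) := by
  have h1 : Nat.card {P : Nat.Partition n // 1 ∉ P.parts ∧ rep P}
      = Nat.card {P : Nat.Partition n // (∀ i ∈ P.parts, 2 ≤ i) ∧ rep P} :=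
    Nat.card_congr (Equiv.subtypeEquivRight fun P => by rw [no_one_iff])
  have h2 := card_split n
  have h3 := card_U n hn
  have h4 := q2p n (by omega)
  have h5 := q2p (n - 1) (by omega)
  have h6 : n - 1 - 1 = n - 2 := by omega
  rw [h6] at h5
  rw [h1]
  omega

lemma neg_T (N : ℕ) (hN : 7 ≤ N) :
    -∑ k ∈ Finset.Icc 4 N, (S 4 N k : ℤ) * ArithmeticFunction.moebius k
      = (p (N - 5) : ℤ) - 2 * (p (N - 6) : ℤ) + (p (N - 7) : ℤ) := by
  rw [T_swap]
  have h1 : ∑ m ∈ Finset.Icc 4 N, (q 4 (N - m) : ℤ) *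
      ∑ k ∈ (Nat.divisors m).filter (fun k => 4 ≤ k), (ArithmeticFunction.moebius k : ℤ)
      = ∑ m ∈ Finset.Icc 4 N, (q 4 (N - m) : ℤ) * (-(c m)) := by
    refine Finset.sum_congr rfl fun m hm => ?_
    rw [moebius_sum_ge4 m (Finset.mem_Icc.1 hm).1]
  rw [h1, ← Finset.sum_neg_distrib]
  have h2 : ∑ m ∈ Finset.Icc 4 N, -((q 4 (N - m) : ℤ) * (-(c m)))
      = ∑ m ∈ Finset.Icc 4 N, c m * (q 4 (N - m) : ℤ) := by
    refine Finset.sum_congr rfl fun m hm => by ring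
  rw [h2]
  have h3 : ∑ m ∈ Finset.Icc 4 N, c m * (q 4 (N - m) : ℤ)
      = ∑ m ∈ Finset.range (N + 1), c m * (q 4 (N - m) : ℤ) := by
    refine Finset.sum_subset (fun m hm => ?_) (fun m hm hm' => ?_)
    · simp only [Finset.mem_Icc] at hm
      exact Finset.mem_range.2 (by omega)
    · simp only [Finset.mem_Icc, Finset.mem_range] at hm hm'
      rw [c, if_pos (by omega)]
      ring
  rw [h3]
  have h4 : ∑ m ∈ Finset.range (N + 1), c m * (q 4 (N - m) : ℤ)
      = PowerSeries.coeff N (Cps * Qs 4) := by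
    rw [PowerSeries.coeff_mul, Finset.Nat.sum_antidiagonal_eq_sum_range_succ_mk]
    refine Finset.sum_congr rfl fun m hm => ?_
    simp [Cps, Qs, PowerSeries.coeff_mk]
  rw [h4, Cps_Qs_coeff N hN]

theorem card_no_ones_max_repeated_eq_neg_sum_S4_moebius (n : ℕ) (hn : 3 ≤ n) :
    (Nat.card {P : Nat.Partition n //
        1 ∉ P.parts ∧
        ∃ m ∈ P.parts, (∀ i ∈ P.parts, i ≤ m) ∧ 2 ≤ P.parts.count m} : ℤ) =
      -∑ k ∈ Finset.Icc 4 (n + 5),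
          (S 4 (n + 5) k : ℤ) * ArithmeticFunction.moebius k ∧
    (p n : ℤ) - 2 * (p (n - 1) : ℤ) + (p (n - 2) : ℤ) =
      -∑ k ∈ Finset.Icc 4 (n + 5),
          (S 4 (n + 5) k : ℤ) * ArithmeticFunction.moebius k := by
  have hT := neg_T (n + 5) (by omega)
  have h5 : n + 5 - 5 = n := by omega
  have h6 : n + 5 - 6 = n - 1 := by omega
  have h7 : n + 5 - 7 = n - 2 := by omega
  rw [h5, h6, h7] at hT
  constructor
  · rw [hT]
    exact card_A n hn
  · rw [hT]
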